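/- In an implicative aBE algebra, for all x, y: y → x = ((x → y) → y) → x. -/
import Mathlib


class ImplicativeABE (X : Type*) where
  imp : X → X → X
  one : X
  one_imp : ∀ x, imp one x = x
  imp_one : ∀ x, imp x one = one
  imp_self : ∀ x, imp x x = one
  exch : ∀ x y z, imp x (imp y z) = imp y (imp x z)
  antisymm : ∀ x y, imp x y = one → imp y x = one → x = y
  implicative : ∀ x y, imp (imp x y) x = x

infixr:60 " ⮕ " => ImplicativeABE.imp
notation "𝟙" => ImplicativeABE.one

theorem stmt9 {X : Type*} [ImplicativeABE X] (x y : X) :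
    y ⮕ x = ((x ⮕ y) ⮕ y) ⮕ x := by
  have hd2 : ((((x ⮕ y) ⮕ y) ⮕ x) ⮕ (y ⮕ x)) = 𝟙 :=
    ((((((((((congr (congrArg ImplicativeABE.imp ((rfl : (((x ⮕ y) ⮕ y) ⮕ x) = (((x ⮕ y) ⮕ y) ⮕ x)))) ((((((ImplicativeABE.implicative (y ⮕ x) ((x ⮕ y) ⮕ y))).symm).trans ((((ImplicativeABE.exch ((y ⮕ x) ⮕ ((x ⮕ y) ⮕ y)) y x)).symm).symm)).trans (((congr (congrArg ImplicativeABE.imp ((rfl : y = y))) (((((ImplicativeABE.one_imp (((x ⮕ y) ⮕ y) ⮕ x))).symm).trans ((ImplicativeABE.exch (𝟙 : X) ((x ⮕ y) ⮕ y) x))).trans ((congr (congrArg ImplicativeABE.imp ((((congr (congrArg ImplicativeABE.imp ((rfl : (x ⮕ y) = (x ⮕ y)))) ((ImplicativeABE.implicative y x)))).symm).trans ((((ImplicativeABE.exch (x ⮕ y) (y ⮕ x) y)).symm).symm))) ((((ImplicativeABE.one_imp x)).symm).symm)))))).symm)).trans ((((ImplicativeABE.exch y ((x ⮕ y) ⮕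 y) x)).symm).symm)))).trans (((ImplicativeABE.exch ((x ⮕ y) ⮕ y) (((x ⮕ y) ⮕ y) ⮕ x) (y ⮕ x))).symm)).trans ((congr (congrArg ImplicativeABE.imp ((rfl : ((x ⮕ y) ⮕ y) = ((x ⮕ y) ⮕ y)))) ((((ImplicativeABE.exch (((x ⮕ y) ⮕ y) ⮕ x) y x)).symm).symm)))).trans ((ImplicativeABE.exch ((x ⮕ y) ⮕ y) y ((((x ⮕ y) ⮕ y) ⮕ x) ⮕ x)))).trans ((congr (congrArg ImplicativeABE.imp ((rfl : y = y))) (((((((ImplicativeABE.exch (((x ⮕ y) ⮕ y) ⮕ x) ((x ⮕ y) ⮕ y) x)).symm).trans ((ImplicativeABE.imp_self (((x ⮕ y) ⮕ y) ⮕ x)))).trans (((ImplicativeABE.implicative (𝟙 : X) (((x ⮕ y) ⮕ y) ⮕ x))).symm)).trans (((congr (congrArg ImplicativeABE.imp (((ImplicativeABE.one_imp (((x ⮕ y) ⮕ y) ⮕ x))).symm)) ((ImplicativeABE.imp_self y)))).symm)).trans (((ImplicativeABE.exch y (((x ⮕ y) ⮕ y) ⮕ x) y)).symm))))).trans ((congr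 (congrArg ImplicativeABE.imp (((ImplicativeABE.implicative y ((((x ⮕ y) ⮕ y) ⮕ x) ⮕ y))).symm)) ((rfl : (y ⮕ ((((x ⮕ y) ⮕ y) ⮕ x) ⮕ y)) = (y ⮕ ((((x ⮕ y) ⮕ y) ⮕ x) ⮕ y))))))).trans ((ImplicativeABE.implicative (y ⮕ ((((x ⮕ y) ⮕ y) ⮕ x) ⮕ y)) y))).trans ((ImplicativeABE.exch y (((x ⮕ y) ⮕ y) ⮕ x) y))).trans ((congr (congrArg ImplicativeABE.imp (((ImplicativeABE.one_imp (((x ⮕ y) ⮕ y) ⮕ x))).symm)) ((ImplicativeABE.imp_self y))))).trans ((ImplicativeABE.implicative (𝟙 : X) (((x ⮕ y) ⮕ y) ⮕ x)))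
  have h4b : (((((x ⮕ y) ⮕ y) ⮕ x) ⮕ y) ⮕ y) = 𝟙 :=
    ((((((((((((ImplicativeABE.implicative (((((x ⮕ y) ⮕ y) ⮕ x) ⮕ y) ⮕ y) (x ⮕ y))).symm).trans ((congr (congrArg ImplicativeABE.imp ((((((((((((congr (congrArg ImplicativeABE.imp ((rfl : (((((x ⮕ y) ⮕ y) ⮕ x) ⮕ y) ⮕ y) = (((((x ⮕ y) ⮕ y) ⮕ x) ⮕ y) ⮕ y)))) (((((((((ImplicativeABE.exch (((x ⮕ y) ⮕ y) ⮕ x) x y)).symm).trans (((congr (congrArg ImplicativeABE.imp ((rfl : (((x ⮕ y) ⮕ y) ⮕ x) = (((x ⮕ y) ⮕ y) ⮕ x)))) ((ImplicativeABE.implicative (x ⮕ y) x)))).symm)).trans ((((ImplicativeABE.exch (((x ⮕ y) ⮕ y) ⮕ x) ((x ⮕ y) ⮕ x) (x ⮕ y))).symm).symm)).trans (((congr (congrArg ImplicativeABE.imp (((ImplicativeABE.implicative x y)).symm)) ((rfl : ((((x ⮕ y) ⮕ y) ⮕ x) ⮕ (x ⮕ y)) = ((((x ⮕ y) ⮕ y)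 ⮕ x) ⮕ (x ⮕ y)))))).symm)).trans (((ImplicativeABE.exch (((x ⮕ y) ⮕ y) ⮕ x) x (x ⮕ y))).symm)).trans (((congr (congrArg ImplicativeABE.imp ((((ImplicativeABE.exch ((x ⮕ y) ⮕ y) (x ⮕ y) x)).symm).trans ((congr (congrArg ImplicativeABE.imp ((rfl : ((x ⮕ y) ⮕ y) = ((x ⮕ y) ⮕ y)))) ((ImplicativeABE.implicative x y)))))) ((((ImplicativeABE.implicative (x ⮕ y) x)).symm).trans (((congr (congrArg ImplicativeABE.imp (((ImplicativeABE.implicative x y)).symm)) ((rfl : (x ⮕ y) = (x ⮕ y))))).symm)))).symm)).trans ((((ImplicativeABE.implicative (x ⮕ y) (((x ⮕ y) ⮕ y) ⮕ x))).symm).symm)))).symm).trans (((ImplicativeABE.exch x (((((x ⮕ y) ⮕ y) ⮕ x) ⮕ y) ⮕ y) ((((x ⮕ y) ⮕ y) ⮕ x) ⮕ y))).symm)).trans (((congr (congrArg ImplicativeABE.imp ((rfl : x = x))) (((ImplicativeABE.implicative ((((x ⮕ y) ⮕ y) ⮕ x) ⮕ y) y)).symm))).symm)).trans (((ImplicativeABE.exch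 (((x ⮕ y) ⮕ y) ⮕ x) x y)).symm)).trans (((congr (congrArg ImplicativeABE.imp ((rfl : (((x ⮕ y) ⮕ y) ⮕ x) = (((x ⮕ y) ⮕ y) ⮕ x)))) ((ImplicativeABE.implicative (x ⮕ y) x)))).symm)).trans ((((ImplicativeABE.exch (((x ⮕ y) ⮕ y) ⮕ x) ((x ⮕ y) ⮕ x) (x ⮕ y))).symm).symm)).trans (((congr (congrArg ImplicativeABE.imp (((ImplicativeABE.implicative x y)).symm)) ((rfl : ((((x ⮕ y) ⮕ y) ⮕ x) ⮕ (x ⮕ y)) = ((((x ⮕ y) ⮕ y) ⮕ x) ⮕ (x ⮕ y)))))).symm)).trans (((ImplicativeABE.exch (((x ⮕ y) ⮕ y) ⮕ x) x (x ⮕ y))).symm)).trans (((congr (congrArg ImplicativeABE.imp ((((ImplicativeABE.exch ((x ⮕ y) ⮕ y) (x ⮕ y) x)).symm).trans ((congr (congrArg ImplicativeABE.imp ((rfl : ((x ⮕ y) ⮕ y) = ((x ⮕ y) ⮕ y)))) ((ImplicativeABE.implicative x y)))))) ((((ImplicativeABE.implicative (x ⮕ y) x)).symm).trans (((congr (congrArg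 ImplicativeABE.imp (((ImplicativeABE.implicative x y)).symm)) ((rfl : (x ⮕ y) = (x ⮕ y))))).symm)))).symm)).trans ((((ImplicativeABE.implicative (x ⮕ y) (((x ⮕ y) ⮕ y) ⮕ x))).symm).symm))) ((rfl : (((((x ⮕ y) ⮕ y) ⮕ x) ⮕ y) ⮕ y) = (((((x ⮕ y) ⮕ y) ⮕ x) ⮕ y) ⮕ y)))))).trans ((ImplicativeABE.exch (x ⮕ y) ((((x ⮕ y) ⮕ y) ⮕ x) ⮕ y) y))).trans ((congr (congrArg ImplicativeABE.imp ((rfl : ((((x ⮕ y) ⮕ y) ⮕ x) ⮕ y) = ((((x ⮕ y) ⮕ y) ⮕ x) ⮕ y)))) ((((ImplicativeABE.implicative ((x ⮕ y) ⮕ y) x)).symm).trans ((((ImplicativeABE.exch (((x ⮕ y) ⮕ y) ⮕ x) (x ⮕ y) y)).symm).symm))))).trans ((ImplicativeABE.exch ((((x ⮕ y) ⮕ y) ⮕ x) ⮕ y) (x ⮕ y) ((((x ⮕ y) ⮕ y) ⮕ x) ⮕ y)))).trans ((congr (congrArg ImplicativeABE.imp ((rfl : (x ⮕ y) = (x ⮕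 y)))) (((((ImplicativeABE.imp_self ((((x ⮕ y) ⮕ y) ⮕ x) ⮕ y))).trans (((ImplicativeABE.implicative (𝟙 : X) (((x ⮕ y) ⮕ y) ⮕ x))).symm)).trans (((congr (congrArg ImplicativeABE.imp (((ImplicativeABE.one_imp (((x ⮕ y) ⮕ y) ⮕ x))).symm)) ((ImplicativeABE.imp_self y)))).symm)).trans ((((ImplicativeABE.exch (((x ⮕ y) ⮕ y) ⮕ x) y y)).symm).symm))))).trans ((congr (congrArg ImplicativeABE.imp ((((congr (congrArg ImplicativeABE.imp ((rfl : x = x))) ((((ImplicativeABE.implicative y ((((x ⮕ y) ⮕ y) ⮕ x) ⮕ y))).symm).symm))).symm).trans (((ImplicativeABE.exch (y ⮕ ((((x ⮕ y) ⮕ y) ⮕ x) ⮕ y)) x y)).symm))) ((rfl : (y ⮕ ((((x ⮕ y) ⮕ y) ⮕ x) ⮕ y)) = (y ⮕ ((((x ⮕ y) ⮕ y) ⮕ x) ⮕ y))))))).trans ((ImplicativeABE.implicative (y ⮕ ((((x ⮕ y) ⮕ y) ⮕ x) ⮕ y)) (x ⮕ y)))).trans (((ImplicativeABE.exch (((x ⮕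 y) ⮕ y) ⮕ x) y y)).symm)).trans ((congr (congrArg ImplicativeABE.imp (((ImplicativeABE.one_imp (((x ⮕ y) ⮕ y) ⮕ x))).symm)) ((ImplicativeABE.imp_self y))))).trans ((ImplicativeABE.implicative (𝟙 : X) (((x ⮕ y) ⮕ y) ⮕ x)))
  have h4a : (y ⮕ (((((x ⮕ y) ⮕ y) ⮕ x)) ⮕ y)) = 𝟙 := by
    rw [ImplicativeABE.exch, ImplicativeABE.imp_self, ImplicativeABE.imp_one]
  have hL4 : ((((x ⮕ y) ⮕ y) ⮕ x) ⮕ y) = y :=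
    ImplicativeABE.antisymm _ _ h4b h4a
  have hd1 : ((y ⮕ x) ⮕ (((x ⮕ y) ⮕ y) ⮕ x)) = 𝟙 := by
    calc (y ⮕ x) ⮕ (((x ⮕ y) ⮕ y) ⮕ x)
        = (y ⮕ x) ⮕ ((((((x ⮕ y) ⮕ y) ⮕ x) ⮕ y)) ⮕ (((x ⮕ y) ⮕ y) ⮕ x)) := by
          rw [ImplicativeABE.implicative]
      _ = (y ⮕ x) ⮕ (y ⮕ (((x ⮕ y) ⮕ y) ⮕ x)) := by rw [hL4]
      _ = (y ⮕ x) ⮕ (((x ⮕ y) ⮕ y) ⮕ (y ⮕ x)) := by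
          rw [ImplicativeABE.exch y ((x ⮕ y) ⮕ y) x]
      _ = ((x ⮕ y) ⮕ y) ⮕ ((y ⮕ x) ⮕ (y ⮕ x)) := ImplicativeABE.exch _ _ _
      _ = ((x ⮕ y) ⮕ y) ⮕ 𝟙 := by rw [ImplicativeABE.imp_self]
      _ = 𝟙 := ImplicativeABE.imp_one _
  exact ImplicativeABE.antisymm _ _ hd1 hd2
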